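/- Let G₁ and G₂ be commutative monoids with a common finite generating set S, and suppose there is a surjective monoid homomorphism φ: G₁ → G₂ fixing S (as generators) whose kernel congruence is 'finite-index torsion', in the sense that whenever ∑ m_s·s = ∑ n_s·s in G₂ there exists k ≥ 1 with ∑ k·m_s·s = ∑ k·n_s·s in G₁. Then a probability distribution μ on S satisfies the centrality equations for G₁ if and only if it satisfies them for G₂. -/
import Mathlib


open scoped BigOperators

/-- if `φ : G₁ → G₂` is a surjective homomorphism of commutative
monoids carrying a common finite generating set `S` to itself, whose kernel
congruence is "finite-index torsion" (relations in `G₂` hold in `G₁` after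
multiplication by some `k ≥ 1`), then a probability distribution `μ` on `S`
satisfies the centrality equations for `G₁` iff it does for `G₂`. -/
theorem centrality_iff_of_torsion_quotient (G₁ G₂ : Type*)
    [AddCommMonoid G₁] [AddCommMonoid G₂]
    (S : Type*) [Fintype S] (gen₁ : S → G₁) (gen₂ : S → G₂)
    (hgen₁ : AddSubmonoid.closure (Set.range gen₁) = ⊤)
    (hgen₂ : AddSubmonoid.closure (Set.range gen₂) = ⊤)
    (φ : G₁ →+ G₂) (hφsurj : Function.Surjective φ)
    (hφgen : ∀ s, φ (gen₁ s) = gen₂ s)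
    (htor : ∀ m n : S → ℕ, ∑ s, m s • gen₂ s = ∑ s, n s • gen₂ s →
      ∃ k : ℕ, 1 ≤ k ∧ ∑ s, (k * m s) • gen₁ s = ∑ s, (k * n s) • gen₁ s)
    (μ : S → ℝ) (hpos : ∀ s, 0 ≤ μ s) (hsum : ∑ s, μ s = 1) :
    (∀ m n : S → ℕ, ∑ s, m s = ∑ s, n s →
        ∑ s, m s • gen₁ s = ∑ s, n s • gen₁ s →
        ∏ s, μ s ^ m s = ∏ s, μ s ^ n s) ↔
    (∀ m n : S → ℕ, ∑ s, m s = ∑ s, n s →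
        ∑ s, m s • gen₂ s = ∑ s, n s • gen₂ s →
        ∏ s, μ s ^ m s = ∏ s, μ s ^ n s) := by
  constructor
  · intro h1 m n hsum12 hrel
    obtain ⟨k, hk, hk2⟩ := htor m n hrel
    have hsum' : ∑ s, k * m s = ∑ s, k * n s := by
      rw [← Finset.mul_sum, ← Finset.mul_sum, hsum12]
    have := h1 (fun s => k * m s) (fun s => k * n s) hsum' hk2
    simp only [pow_mul'] at this
    rw [Finset.prod_pow, Finset.prod_pow] at this
    have hk0 : k ≠ 0 := by omega
    exact (pow_left_inj₀ (Finset.prod_nonneg fun s _ => pow_nonneg (hpos s) _)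
      (Finset.prod_nonneg fun s _ => pow_nonneg (hpos s) _) hk0).mp this
  · intro h2 m n hsum12 hrel
    apply h2 m n hsum12
    have : φ (∑ s, m s • gen₁ s) = φ (∑ s, n s • gen₁ s) := by rw [hrel]
    simpa [map_sum, map_nsmul, hφgen] using this
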